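/- With Aₙ defined as the (n+1)×(n+1) matrix Aₙ(i,j) = ∑_{s=max(i-j,0)}^{min(n+1-j, i-1)} C(i-1, s)·C(n+1-i, j-i+s)·α^{j-i+2s}·(1-α)^{n-(j-i+2s)} for real α, let Aₙ* be the matrix with entries Aₙ*(i,j) = (-1)^{i+j}·Aₙ(i,j). Then Aₙ · Aₙ* = (1-2α)^n · I, where I is the (n+1)×(n+1) identity matrix. -/

import Mathlib

noncomputable def Amat (n : ℕ) (α : ℝ) : Matrix (Fin (n+1)) (Fin (n+1)) ℝ :=
  Matrix.of fun i j =>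
    ∑ s ∈ Finset.Icc ((i : ℕ) - (j : ℕ)) (min (n - (j : ℕ)) (i : ℕ)),
      ((i : ℕ).choose s : ℝ) * ((n - (i : ℕ)).choose ((j : ℕ) + s - (i : ℕ)) : ℝ) *
        α ^ ((j : ℕ) + 2 * s - (i : ℕ)) * (1 - α) ^ (n - ((j : ℕ) + 2 * s - (i : ℕ)))

open Polynomial Finset

lemma coeff_linear_pow (a b : ℝ) (m k : ℕ) :
    ((C a + C b * X)^m).coeff k = (m.choose k : ℝ) * b^k * a^(m-k) := by
  rw [add_pow, finset_sum_coeff]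
  rw [Finset.sum_congr rfl (g := fun x => if k = m - x then a^x * b^(m-x) * (m.choose x : ℝ) else 0)
    (fun x _ => by
      have h1 : (C a)^x * (C b * X)^(m-x) * ((m.choose x : ℕ) : ℝ[X])
          = C (a^x * b^(m-x) * (m.choose x : ℝ)) * X^(m-x) := by
        rw [mul_pow, ← C_pow, ← C_pow, ← C_eq_natCast, C_mul, C_mul]; ring
      rw [h1, coeff_C_mul, coeff_X_pow, mul_ite, mul_one, mul_zero])]
  rcases le_or_gt k m with h | h
  · rw [Finset.sum_eq_single (m - k)]
    · simp only [Nat.sub_sub_self h, Nat.choose_symm h, if_pos rfl, if_true]; ring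
    · intro x hx hne
      simp only [Finset.mem_range] at hx
      have : k ≠ m - x := fun hc => hne (by omega)
      simp [this]
    · intro hx; exact absurd (Finset.mem_range.2 (by omega)) hx
  · rw [Finset.sum_eq_zero, Nat.choose_eq_zero_of_lt h]
    · simp
    · intro x hx
      simp only [Finset.mem_range] at hx
      have : k ≠ m - x := by omega
      simp [this]

lemma coeff_prod_linear (a b c d : ℝ) (m1 m2 k : ℕ) :
    ((C a + C b * X)^m1 * (C c + C d * X)^m2).coeff k
      = ∑ x ∈ range (k+1), ((m1.choose x : ℝ) * b^x * a^(m1-x)) *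
          ((m2.choose (k-x) : ℝ) * d^(k-x) * c^(m2-(k-x))) := by
  rw [coeff_mul, Finset.Nat.sum_antidiagonal_eq_sum_range_succ_mk]
  simp [coeff_linear_pow]

lemma Amat_coeff (n : ℕ) (α : ℝ) (i j : ℕ) (hi : i ≤ n) (hj : j ≤ n) :
    (∑ s ∈ Finset.Icc (i - j) (min (n - j) i),
      (i.choose s : ℝ) * ((n - i).choose (j + s - i) : ℝ) *
        α ^ (j + 2 * s - i) * (1 - α) ^ (n - (j + 2 * s - i)))
    = ((C α + C (1-α) * X)^i * (C (1-α) + C α * X)^(n-i)).coeff j := by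
  rw [coeff_prod_linear]
  have hL : (∑ s ∈ Finset.Icc (i - j) (min (n - j) i),
      (i.choose s : ℝ) * ((n - i).choose (j + s - i) : ℝ) *
        α ^ (j + 2 * s - i) * (1 - α) ^ (n - (j + 2 * s - i)))
      = ∑ s ∈ Finset.Icc (i - j) i,
      (i.choose s : ℝ) * ((n - i).choose (j + s - i) : ℝ) *
        α ^ (j + 2 * s - i) * (1 - α) ^ (n - (j + 2 * s - i)) := by
    apply Finset.sum_subset (Finset.Icc_subset_Icc le_rfl (min_le_right _ _))
    intro s hs hns
    simp only [Finset.mem_Icc, lt_min_iff, not_and, not_le, le_min_iff] at hs hns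
    have h1 : n - i < j + s - i := by omega
    rw [Nat.choose_eq_zero_of_lt h1]
    simp
  have hR : (∑ x ∈ range (j+1), ((i.choose x : ℝ) * (1-α)^x * α^(i-x)) *
          (((n-i).choose (j-x) : ℝ) * α^(j-x) * (1-α)^(n-i-(j-x))))
      = ∑ x ∈ Finset.Icc 0 (min j i), ((i.choose x : ℝ) * (1-α)^x * α^(i-x)) *
          (((n-i).choose (j-x) : ℝ) * α^(j-x) * (1-α)^(n-i-(j-x))) := by
    refine (Finset.sum_subset ?_ ?_).symm
    · intro x hx; simp only [Finset.mem_Icc, Finset.mem_range] at *; omega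
    · intro x hx hnx
      simp only [Finset.mem_Icc, Finset.mem_range, le_min_iff, not_and, not_le] at hx hnx
      have h1 : i < x := by omega
      rw [Nat.choose_eq_zero_of_lt h1]
      simp
  rw [hL, hR]
  refine Finset.sum_nbij' (fun s => i - s) (fun x => i - x) ?_ ?_ ?_ ?_ ?_
  · intro s hs; simp only [Finset.mem_Icc, le_min_iff] at *; omega
  · intro x hx; simp only [Finset.mem_Icc, le_min_iff] at *; omega
  · intro s hs; simp only [Finset.mem_Icc] at hs; omega
  · intro x hx; simp only [Finset.mem_Icc, le_min_iff] at hx; omega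
  · intro s hs
    simp only [Finset.mem_Icc] at hs
    obtain ⟨hs1, hs2⟩ := hs
    have e1 : i - (i - s) = s := by omega
    have e2 : j - (i - s) = j + s - i := by omega
    have e3 : i.choose (i - s) = i.choose s := Nat.choose_symm hs2
    rw [e1, e2, e3]
    rcases le_or_gt (j + s) n with h | h
    · have e4 : (i - s) + (n - i - (j + s - i)) = n - (j + 2*s - i) := by omega
      have e5 : s + (j + s - i) = j + 2*s - i := by omega
      rw [← e4, ← e5, pow_add, pow_add]
      ring
    · have h1 : n - i < j + s - i := by omega
      rw [Nat.choose_eq_zero_of_lt h1]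
      simp

lemma key (n i : ℕ) (α : ℝ) (hi : i ≤ n) :
    ∑ j ∈ range (n+1), C (((C α + C (1-α)*X)^i * (C (1-α) + C α * X)^(n-i)).coeff j) *
        ((C (1-α) * X - C α)^j * (C (1-α) - C α * X)^(n-j))
      = C ((1-2*α)^n) * X^i := by
  set P : ℝ[X] := (C α + C (1-α)*X)^i * (C (1-α) + C α * X)^(n-i) with hP
  have hdeg : P.natDegree < n + 1 := by
    have h1 : ((C α + C (1-α)*X) : ℝ[X]).natDegree ≤ 1 := by
      rw [add_comm]; exact natDegree_linear_le
    have h2 : ((C (1-α) + C α * X) : ℝ[X]).natDegree ≤ 1 := by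
      rw [add_comm]; exact natDegree_linear_le
    calc P.natDegree ≤ _ + _ := natDegree_mul_le
      _ ≤ i * 1 + (n - i) * 1 :=
        add_le_add (natDegree_pow_le.trans (Nat.mul_le_mul le_rfl h1))
          (natDegree_pow_le.trans (Nat.mul_le_mul le_rfl h2))
      _ < n + 1 := by omega
  set K := RatFunc ℝ
  set φ : ℝ[X] →+* K := (algebraMap ℝ[X] K : _ →+* K) with hφ
  refine RatFunc.algebraMap_injective ℝ ?_
  -- nonvanishing of w
  have hwpoly : (C (1-α) - C α * X : ℝ[X]) ≠ 0 := by
    intro h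
    have h0 : ((C (1-α) - C α * X : ℝ[X])).coeff 0 = 0 := by rw [h]; simp
    have h1 : ((C (1-α) - C α * X : ℝ[X])).coeff 1 = 0 := by rw [h]; simp
    simp [coeff_sub, coeff_C, coeff_C_mul, coeff_X, coeff_one] at h0 h1
    linarith
  have hw : φ (C (1-α) - C α * X) ≠ 0 := by
    simp only [hφ, ne_eq, map_eq_zero_iff _ (RatFunc.algebraMap_injective ℝ)]
    exact fun h => hwpoly ((map_eq_zero_iff _ (RatFunc.algebraMap_injective ℝ)).1 h)
  set u : K := φ (C (1-α) * X - C α) with hu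
  set w : K := φ (C (1-α) - C α * X) with hwdef
  -- aeval identity
  have haev := aeval_eq_sum_range' (R := ℝ) (S := K) hdeg (u / w)
  have halg : ∀ r : ℝ, algebraMap ℝ K r = φ (C r) := by
    intro r
    rw [IsScalarTower.algebraMap_apply ℝ ℝ[X] K r, Polynomial.algebraMap_eq]
  have hcan : ∀ (x : K) (j : ℕ), j ≤ n → w^n * (x/w)^j = x^j * w^(n-j) := by
    intro x j hj
    rw [div_pow, pow_sub₀ w hw hj]
    ring
  -- left chain
  have hleft : w^n * aeval (u/w) P
      = φ (∑ j ∈ range (n+1), C (P.coeff j) *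
            ((C (1-α) * X - C α)^j * (C (1-α) - C α * X)^(n-j))) := by
    rw [haev, Finset.mul_sum, map_sum]
    refine Finset.sum_congr rfl fun j hj => ?_
    simp only [Finset.mem_range] at hj
    rw [Algebra.smul_def, halg, mul_comm (φ (C (P.coeff j))) _, ← mul_assoc,
      hcan _ j (by omega), map_mul, map_mul, map_pow, map_pow, ← hu, ← hwdef]
    ring
  -- right chain
  have e1 : aeval (u/w) ((C α + C (1-α)*X : ℝ[X])) = φ (C (1-2*α) * X) / w := by
    rw [map_add, aeval_C, map_mul, aeval_C, aeval_X, halg, halg, eq_div_iff hw]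
    rw [hwdef, hu]
    rw [add_mul, mul_assoc, div_mul_cancel₀ _ hw]
    rw [← map_mul, ← map_mul, ← map_add]
    congr 1
    simp only [map_sub, map_one, map_mul, map_ofNat]
    ring
  have e2 : aeval (u/w) ((C (1-α) + C α * X : ℝ[X])) = φ (C (1-2*α)) / w := by
    rw [map_add, aeval_C, map_mul, aeval_C, aeval_X, halg, halg, eq_div_iff hw]
    rw [hwdef, hu]
    rw [add_mul, mul_assoc, div_mul_cancel₀ _ hw]
    rw [← map_mul, ← map_mul, ← map_add]
    congr 1
    simp only [map_sub, map_one, map_mul, map_ofNat]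
    ring
  have hright : w^n * aeval (u/w) P = φ (C ((1-2*α)^n) * X^i) := by
    rw [hP, map_mul, map_pow, map_pow, e1, e2]
    rw [div_pow, div_pow, div_mul_div_comm, ← pow_add, Nat.add_sub_cancel' hi,
      mul_comm (w^n) _, div_mul_cancel₀ _ (pow_ne_zero n hw)]
    rw [← map_pow, ← map_pow, ← map_mul]
    congr 1
    rw [mul_pow, ← C_pow, ← C_pow, mul_right_comm, ← C_mul, ← pow_add,
      Nat.add_sub_cancel' hi]
  rw [← hleft, hright]

lemma Qcoeff (n j k : ℕ) (α : ℝ) :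
    ((C (1-α) * X - C α)^j * (C (1-α) - C α * X)^(n-j)).coeff k
      = (-1 : ℝ)^(j+k) * ((C α + C (1-α)*X)^j * (C (1-α) + C α * X)^(n-j)).coeff k := by
  have h1 : (C (1-α) * X - C α : ℝ[X]) = C (-α) + C (1-α) * X := by
    rw [map_neg]; ring
  have h2 : (C (1-α) - C α * X : ℝ[X]) = C (1-α) + C (-α) * X := by
    rw [map_neg]; ring
  rw [h1, h2, coeff_prod_linear, coeff_prod_linear, Finset.mul_sum]
  refine Finset.sum_congr rfl fun x hx => ?_
  simp only [Finset.mem_range] at hx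
  rcases le_or_gt x j with h | h
  · have e : (j - x) + (k - x) + 2*x = j + k := by omega
    rw [neg_pow α (j-x), neg_pow α (k-x), ← e, pow_add, pow_add, pow_mul, neg_one_sq, one_pow]
    ring
  · rw [Nat.choose_eq_zero_of_lt h]
    simp

theorem stmt_5 (n : ℕ) (α : ℝ) :
    Amat n α * (Matrix.of fun i j : Fin (n+1) => (-1 : ℝ) ^ ((i : ℕ) + (j : ℕ)) * Amat n α i j)
      = (1 - 2*α)^n • (1 : Matrix (Fin (n+1)) (Fin (n+1)) ℝ) := by
  ext i k
  rw [Matrix.mul_apply]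
  have hA : ∀ (a b : Fin (n+1)), Amat n α a b
      = ((C α + C (1-α)*X)^(a:ℕ) * (C (1-α) + C α * X)^(n-(a:ℕ))).coeff (b:ℕ) := by
    intro a b
    rw [show Amat n α a b = ∑ s ∈ Finset.Icc ((a : ℕ) - (b : ℕ)) (min (n - (b : ℕ)) (a : ℕ)),
      ((a : ℕ).choose s : ℝ) * ((n - (a : ℕ)).choose ((b : ℕ) + s - (a : ℕ)) : ℝ) *
        α ^ ((b : ℕ) + 2 * s - (a : ℕ)) * (1 - α) ^ (n - ((b : ℕ) + 2 * s - (a : ℕ))) from rfl]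
    exact Amat_coeff n α a b (Nat.lt_succ_iff.1 a.isLt) (Nat.lt_succ_iff.1 b.isLt)
  have step : ∀ j : Fin (n+1),
      Amat n α i j * ((-1 : ℝ) ^ ((j : ℕ) + (k : ℕ)) * Amat n α j k)
      = (C (((C α + C (1-α)*X)^(i:ℕ) * (C (1-α) + C α * X)^(n-(i:ℕ))).coeff (j:ℕ)) *
          ((C (1-α) * X - C α)^(j:ℕ) * (C (1-α) - C α * X)^(n-(j:ℕ)))).coeff (k:ℕ) := by
    intro j
    rw [hA i j, hA j k, coeff_C_mul, Qcoeff]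
  simp only [Matrix.of_apply]
  rw [Finset.sum_congr rfl (fun j _ => step j)]
  refine (Fin.sum_univ_eq_sum_range (fun j =>
    (C (((C α + C (1-α)*X)^(i:ℕ) * (C (1-α) + C α * X)^(n-(i:ℕ))).coeff j) *
          ((C (1-α) * X - C α)^j * (C (1-α) - C α * X)^(n-j))).coeff (k:ℕ)) (n+1)).trans ?_
  rw [← finset_sum_coeff, key n (i:ℕ) α (Nat.lt_succ_iff.1 i.isLt), coeff_C_mul, coeff_X_pow]
  rw [Matrix.smul_apply, Matrix.one_apply]
  rcases eq_or_ne i k with h | h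
  · simp [h]
  · have : (k : ℕ) ≠ (i : ℕ) := fun hc => h (Fin.ext hc.symm)
    simp [h, this]
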